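/- Let β > 1/6 and H > 0, and let {x_k}_{k≥1} be a sequence of nonnegative real numbers satisfying x_{k+1} ≤ (1 − 2β/k) x_k + H/k^{4/3} for all k ≥ 1. Then limsup_{k→∞} k^{1/3} · x_k ≤ H/(2β − 1/3); in particular x_k = O(k^{−1/3}). -/

import Mathlib

open Real Filter

lemma aux1 (t : ℝ) (ht : 1 ≤ t) :
    t ^ (-(1:ℝ)/3) - (t+1) ^ (-(1:ℝ)/3) ≤ (1/3) * t ^ (-(4:ℝ)/3) := by
  have ht0 : (0:ℝ) < t := by linarith
  have ht1 : (0:ℝ) < t + 1 := by linarith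
  set a := t ^ ((1:ℝ)/3) with had
  set b := (t+1) ^ ((1:ℝ)/3) with hbd
  have ha : 0 < a := rpow_pos_of_pos ht0 _
  have hb : 0 < b := rpow_pos_of_pos ht1 _
  have hab : a ≤ b := rpow_le_rpow (le_of_lt ht0) (by linarith) (by norm_num)
  have ha3 : a ^ 3 = t := by
    rw [had, ← rpow_natCast (t ^ ((1:ℝ)/3)) 3, ← rpow_mul ht0.le]
    norm_num
  have hb3 : b ^ 3 = t + 1 := by
    rw [hbd, ← rpow_natCast ((t+1) ^ ((1:ℝ)/3)) 3, ← rpow_mul ht1.le]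
    norm_num
  have h1 : t ^ (-(1:ℝ)/3) = a⁻¹ := by
    rw [had, ← rpow_neg ht0.le]; norm_num
  have h2 : (t+1) ^ (-(1:ℝ)/3) = b⁻¹ := by
    rw [hbd, ← rpow_neg ht1.le]; norm_num
  have h3 : t ^ (-(4:ℝ)/3) = (a^4)⁻¹ := by
    rw [had, ← rpow_natCast (t ^ ((1:ℝ)/3)) 4, ← rpow_mul ht0.le, ← rpow_neg ht0.le]
    norm_num
  rw [h1, h2, h3]
  have hba : b - a ≤ 1/(3*a^2) := by
    rw [le_div_iff₀ (by positivity)]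
    nlinarith [sq_nonneg (b - a), mul_pos ha hb]
  have e1 : a⁻¹ - b⁻¹ = (b - a) / (a*b) := by
    field_simp
  rw [e1, div_le_iff₀ (by positivity), inv_eq_one_div]
  have h2' : 1/3 * (1/(a^4)) * (a*b) = b/(3*a^3) := by
    field_simp
  rw [h2']
  calc b - a ≤ 1/(3*a^2) := hba
    _ = a/(3*a^3) := by field_simp
    _ ≤ b/(3*a^3) := by
        gcongr

lemma aux2 (t : ℝ) (ht : 1 ≤ t) :
    (t+1) ^ ((1:ℝ)/3) ≤ (1 + 1/(3*t)) * t ^ ((1:ℝ)/3) := by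
  have ht0 : (0:ℝ) < t := by linarith
  have hc : (0:ℝ) ≤ 1 + 1/(3*t) := by positivity
  have h1 : t + 1 ≤ (1 + 1/(3*t))^3 * t := by
    have h2 : (1 + 1/(3*t))^3 * t = t + 1 + (1/(3*t) + 1/(27*t^2)) := by
      field_simp; ring
    rw [h2]
    have : (0:ℝ) ≤ 1/(3*t) + 1/(27*t^2) := by positivity
    linarith
  calc (t+1) ^ ((1:ℝ)/3) ≤ ((1 + 1/(3*t))^3 * t) ^ ((1:ℝ)/3) :=
        rpow_le_rpow (by linarith) h1 (by norm_num)
    _ = (1 + 1/(3*t)) * t ^ ((1:ℝ)/3) := by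
        rw [mul_rpow (by positivity) ht0.le, ← rpow_natCast (1 + 1/(3*t)) 3,
          ← rpow_mul hc]
        norm_num

set_option maxHeartbeats 1000000 in
theorem stmt_1 (x : ℕ → ℝ) (β H : ℝ)
    (hβ : 1 / 6 < β) (hH : 0 < H)
    (hx : ∀ k : ℕ, 1 ≤ k → 0 ≤ x k)
    (hrec : ∀ k : ℕ, 1 ≤ k →
      x (k + 1) ≤ (1 - 2 * β / (k : ℝ)) * x k + H / (k : ℝ) ^ ((4 : ℝ) / 3)) :
    Filter.limsup (fun k : ℕ => (k : ℝ) ^ ((1 : ℝ) / 3) * x k) Filter.atTop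
        ≤ H / (2 * β - 1 / 3) ∧
      (fun k : ℕ => x k) =O[Filter.atTop] fun k : ℕ => (k : ℝ) ^ (-(1 : ℝ) / 3) := by
  have hδ : (0:ℝ) < 2*β - 1/3 := by linarith
  set M := H / (2*β - 1/3) with hMdef
  have hM : 0 < M := div_pos hH hδ
  have hHM : H = M * (2*β - 1/3) := by
    rw [hMdef, div_mul_cancel₀ _ (ne_of_gt hδ)]
  set e : ℕ → ℝ := fun k => x k - M * (k:ℝ) ^ (-(1:ℝ)/3) with hedef
  -- step lemma
  have hstep : ∀ k : ℕ, 1 ≤ k → e (k+1) ≤ (1 - 2*β/(k:ℝ)) * e k := by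
    intro k hk
    have hk1 : (1:ℝ) ≤ (k:ℝ) := by exact_mod_cast hk
    have hk0 : (0:ℝ) < (k:ℝ) := by linarith
    have hA := aux1 (k:ℝ) hk1
    have hQP : (k:ℝ)⁻¹ * (k:ℝ) ^ (-(1:ℝ)/3) = (k:ℝ) ^ (-(4:ℝ)/3) := by
      rw [← rpow_neg_one (k:ℝ), ← rpow_add hk0]
      norm_num
    have hdiv : H / (k:ℝ) ^ ((4:ℝ)/3) = H * (k:ℝ) ^ (-(4:ℝ)/3) := by
      rw [div_eq_mul_inv, ← rpow_neg hk0.le]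
      norm_num
    have hrk := hrec k hk
    rw [hdiv] at hrk
    have key : (1 - 2*β/(k:ℝ)) * (M * (k:ℝ) ^ (-(1:ℝ)/3)) + H * (k:ℝ) ^ (-(4:ℝ)/3)
        ≤ M * ((k:ℝ)+1) ^ (-(1:ℝ)/3) := by
      have expand : (1 - 2*β/(k:ℝ)) * (M * (k:ℝ) ^ (-(1:ℝ)/3)) + H * (k:ℝ) ^ (-(4:ℝ)/3)
          = M * (k:ℝ) ^ (-(1:ℝ)/3) - (M/3) * (k:ℝ) ^ (-(4:ℝ)/3) := by
        rw [hHM, ← hQP, div_eq_mul_inv]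
        ring
      rw [expand]
      have hA' := mul_le_mul_of_nonneg_left hA hM.le
      nlinarith
    have hcast : ((k+1:ℕ):ℝ) = (k:ℝ)+1 := by push_cast; ring
    have he1 : e (k+1) = x (k+1) - M * ((k:ℝ)+1) ^ (-(1:ℝ)/3) := by
      simp only [hedef, hcast]
    have hring : (1 - 2*β/(k:ℝ)) * e k
        = (1 - 2*β/(k:ℝ)) * x k - (1 - 2*β/(k:ℝ)) * (M * (k:ℝ) ^ (-(1:ℝ)/3)) := by
      simp only [hedef]; ring
    rw [he1, hring]
    linarith
  set K0 : ℕ := ⌈2*β⌉₊ + 2 with hK0def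
  have hK0c : 2*β + 2 ≤ (K0:ℝ) := by
    have h := Nat.le_ceil (2*β)
    rw [hK0def]
    push_cast
    linarith
  have hK01 : 1 ≤ K0 := by omega
  have hK0p : (0:ℝ) < (K0:ℝ) := by
    have : (0:ℕ) < K0 := hK01
    exact_mod_cast this
  set g : ℕ → ℝ := fun k => (k:ℝ) ^ ((1:ℝ)/3) * max (e k) 0 with hgdef
  have hg0 : ∀ k, 0 ≤ g k := fun k =>
    mul_nonneg (rpow_nonneg (Nat.cast_nonneg k) _) (le_max_right _ _)
  set B : ℝ := g K0 * (K0:ℝ) ^ (2*β - 1/3) with hBdef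
  have hB : 0 ≤ B := mul_nonneg (hg0 K0) (rpow_nonneg (Nat.cast_nonneg K0) _)
  have main : ∀ n : ℕ, K0 ≤ n → g n ≤ B * (n:ℝ) ^ (-(2*β - 1/3)) := by
    intro n hn
    induction n, hn using Nat.le_induction with
    | base =>
      have h1 : (K0:ℝ) ^ (2*β-1/3) * (K0:ℝ) ^ (-(2*β-1/3)) = 1 := by
        rw [← rpow_add hK0p]; norm_num
      rw [hBdef, mul_assoc, h1, mul_one]
    | succ n hn ih =>
      have hn1 : (1:ℝ) ≤ (n:ℝ) := by
        have : 1 ≤ n := le_trans hK01 hn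
        exact_mod_cast this
      have hnpos : (0:ℝ) < (n:ℝ) := by linarith
      have hn2β : 2*β + 2 ≤ (n:ℝ) := le_trans hK0c (by exact_mod_cast hn)
      have hfac : 0 ≤ 1 - 2*β/(n:ℝ) := by
        rw [sub_nonneg, div_le_one hnpos]
        linarith
      have hmax : max (e (n+1)) 0 ≤ (1 - 2*β/(n:ℝ)) * max (e n) 0 := by
        apply max_le
        · exact le_trans (hstep n (le_trans hK01 hn))
            (mul_le_mul_of_nonneg_left (le_max_left _ _) hfac)
        · exact mul_nonneg hfac (le_max_right _ _)
      have hcast : ((n+1:ℕ):ℝ) = (n:ℝ)+1 := by push_cast; ring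
      have hcoef : (1 + 1/(3*(n:ℝ))) * (1 - 2*β/(n:ℝ)) ≤ 1 - (2*β - 1/3)/(n:ℝ) := by
        have hid : (1 + 1/(3*(n:ℝ))) * (1 - 2*β/(n:ℝ))
            = 1 - (2*β - 1/3)/(n:ℝ) - (2*β)/(3*(n:ℝ)^2) := by
          field_simp
          ring
        have hpos2 : 0 ≤ (2*β)/(3*(n:ℝ)^2) := by positivity
        linarith
      have hexp : 1 - (2*β - 1/3)/(n:ℝ) ≤ Real.exp (-((2*β - 1/3)/(n:ℝ))) := by
        linarith [Real.add_one_le_exp (-((2*β - 1/3)/(n:ℝ)))]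
      have hlast : Real.exp (-((2*β - 1/3)/(n:ℝ))) * (n:ℝ) ^ (-(2*β - 1/3))
          ≤ ((n:ℝ)+1) ^ (-(2*β - 1/3)) := by
        rw [rpow_def_of_pos hnpos, rpow_def_of_pos (by linarith : (0:ℝ) < (n:ℝ)+1),
          ← Real.exp_add, Real.exp_le_exp]
        have hlog : Real.log ((n:ℝ)+1) - Real.log (n:ℝ) ≤ 1/(n:ℝ) := by
          rw [← Real.log_div (by linarith) (ne_of_gt hnpos)]
          have h2 := Real.log_le_sub_one_of_pos (show (0:ℝ) < ((n:ℝ)+1)/(n:ℝ) by positivity)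
          have h3 : ((n:ℝ)+1)/(n:ℝ) - 1 = 1/(n:ℝ) := by field_simp; ring
          linarith
        have h4 := mul_le_mul_of_nonneg_left hlog hδ.le
        have h5 : (2*β - 1/3) * (1/(n:ℝ)) = (2*β - 1/3)/(n:ℝ) := by ring
        nlinarith
      calc g (n+1) = ((n:ℝ)+1) ^ ((1:ℝ)/3) * max (e (n+1)) 0 := by
            rw [hgdef]; simp only [hcast]
        _ ≤ ((n:ℝ)+1) ^ ((1:ℝ)/3) * ((1 - 2*β/(n:ℝ)) * max (e n) 0) :=
            mul_le_mul_of_nonneg_left hmax (rpow_nonneg (by linarith) _)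
        _ ≤ ((1 + 1/(3*(n:ℝ))) * (n:ℝ) ^ ((1:ℝ)/3)) * ((1 - 2*β/(n:ℝ)) * max (e n) 0) :=
            mul_le_mul_of_nonneg_right (aux2 (n:ℝ) hn1)
              (mul_nonneg hfac (le_max_right _ _))
        _ = ((1 + 1/(3*(n:ℝ))) * (1 - 2*β/(n:ℝ))) * g n := by
            rw [hgdef]; ring
        _ ≤ (1 - (2*β - 1/3)/(n:ℝ)) * g n :=
            mul_le_mul_of_nonneg_right hcoef (hg0 n)
        _ ≤ Real.exp (-((2*β - 1/3)/(n:ℝ))) * g n :=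
            mul_le_mul_of_nonneg_right hexp (hg0 n)
        _ ≤ Real.exp (-((2*β - 1/3)/(n:ℝ))) * (B * (n:ℝ) ^ (-(2*β - 1/3))) :=
            mul_le_mul_of_nonneg_left ih (Real.exp_nonneg _)
        _ = B * (Real.exp (-((2*β - 1/3)/(n:ℝ))) * (n:ℝ) ^ (-(2*β - 1/3))) := by ring
        _ ≤ B * ((n:ℝ)+1) ^ (-(2*β - 1/3)) :=
            mul_le_mul_of_nonneg_left hlast hB
        _ = B * ((n+1:ℕ):ℝ) ^ (-(2*β - 1/3)) := by rw [hcast]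
  have hxb : ∀ k : ℕ, K0 ≤ k → (k:ℝ) ^ ((1:ℝ)/3) * x k ≤ M + B * (k:ℝ) ^ (-(2*β - 1/3)) := by
    intro k hk
    have hk1 : (1:ℝ) ≤ (k:ℝ) := by
      have : 1 ≤ k := le_trans hK01 hk
      exact_mod_cast this
    have hkpos : (0:ℝ) < (k:ℝ) := by linarith
    have hone : (k:ℝ) ^ ((1:ℝ)/3) * (k:ℝ) ^ (-(1:ℝ)/3) = 1 := by
      rw [← rpow_add hkpos]; norm_num
    have h1 : (k:ℝ) ^ ((1:ℝ)/3) * x k = (k:ℝ) ^ ((1:ℝ)/3) * e k + M := by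
      simp only [hedef]
      rw [mul_sub, show (k:ℝ) ^ ((1:ℝ)/3) * (M * (k:ℝ) ^ (-(1:ℝ)/3))
        = M * ((k:ℝ) ^ ((1:ℝ)/3) * (k:ℝ) ^ (-(1:ℝ)/3)) from by ring, hone, mul_one]
      ring
    have h2 : (k:ℝ) ^ ((1:ℝ)/3) * e k ≤ g k :=
      mul_le_mul_of_nonneg_left (le_max_left _ _) (rpow_nonneg hkpos.le _)
    have h3 := main k hk
    linarith
  constructor
  · have htend : Tendsto (fun k : ℕ => M + B * (k:ℝ) ^ (-(2*β - 1/3))) atTop (nhds M) := by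
      have h0 : Tendsto (fun k : ℕ => (k:ℝ) ^ (-(2*β - 1/3))) atTop (nhds 0) :=
        (tendsto_rpow_neg_atTop hδ).comp tendsto_natCast_atTop_atTop
      have h1 := (h0.const_mul B).const_add M
      simpa using h1
    have hle : ∀ᶠ k : ℕ in atTop, (k:ℝ) ^ ((1:ℝ)/3) * x k
        ≤ M + B * (k:ℝ) ^ (-(2*β - 1/3)) := eventually_atTop.mpr ⟨K0, hxb⟩
    have hcb : IsCoboundedUnder (· ≤ ·) atTop (fun k : ℕ => (k:ℝ) ^ ((1:ℝ)/3) * x k) := by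
      apply isCoboundedUnder_le_of_eventually_le (x := 0) atTop
      filter_upwards [eventually_ge_atTop 1] with k hk
      exact mul_nonneg (rpow_nonneg (Nat.cast_nonneg k) _) (hx k hk)
    calc limsup (fun k : ℕ => (k:ℝ) ^ ((1:ℝ)/3) * x k) atTop
        ≤ limsup (fun k : ℕ => M + B * (k:ℝ) ^ (-(2*β - 1/3))) atTop :=
          limsup_le_limsup hle hcb htend.isBoundedUnder_le
      _ = M := htend.limsup_eq
  · rw [Asymptotics.isBigO_iff]
    refine ⟨M + B, ?_⟩
    filter_upwards [eventually_ge_atTop K0] with k hk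
    have hk1n : 1 ≤ k := le_trans hK01 hk
    have hk1 : (1:ℝ) ≤ (k:ℝ) := by exact_mod_cast hk1n
    have hkpos : (0:ℝ) < (k:ℝ) := by linarith
    have hone : (k:ℝ) ^ (-(1:ℝ)/3) * (k:ℝ) ^ ((1:ℝ)/3) = 1 := by
      rw [← rpow_add hkpos]; norm_num
    have hgle : g k ≤ B := by
      have h3 := main k hk
      have h4 : (k:ℝ) ^ (-(2*β - 1/3)) ≤ 1 :=
        rpow_le_one_of_one_le_of_nonpos hk1 (by linarith)
      nlinarith
    have hmaxle : max (e k) 0 ≤ B * (k:ℝ) ^ (-(1:ℝ)/3) := by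
      have h5 : max (e k) 0 = (k:ℝ) ^ (-(1:ℝ)/3) * g k := by
        rw [hgdef, show (k:ℝ) ^ (-(1:ℝ)/3) * ((k:ℝ) ^ ((1:ℝ)/3) * max (e k) 0)
          = ((k:ℝ) ^ (-(1:ℝ)/3) * (k:ℝ) ^ ((1:ℝ)/3)) * max (e k) 0 from by ring, hone,
          one_mul]
      rw [h5]
      have := mul_le_mul_of_nonneg_left hgle (rpow_nonneg hkpos.le (-(1:ℝ)/3))
      linarith
    have hxk : x k ≤ (M + B) * (k:ℝ) ^ (-(1:ℝ)/3) := by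
      have h6 : x k = e k + M * (k:ℝ) ^ (-(1:ℝ)/3) := by simp [hedef]
      have h7 : e k ≤ max (e k) 0 := le_max_left _ _
      have h8 : (M + B) * (k:ℝ) ^ (-(1:ℝ)/3)
          = M * (k:ℝ) ^ (-(1:ℝ)/3) + B * (k:ℝ) ^ (-(1:ℝ)/3) := by ring
      rw [h6, h8]
      have h9 : e k ≤ B * (k:ℝ) ^ (-(1:ℝ)/3) := le_trans h7 hmaxle
      linarith
    rw [Real.norm_of_nonneg (hx k hk1n),
      Real.norm_of_nonneg (rpow_nonneg hkpos.le _)]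
    exact hxk
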